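/- For real α > 0 define υ(α) := 2^{α+1}/(2^{α+1} − 2) and the digitally-shift-invariant kernel K⃛_α on [0,1) × [0,1) by K⃛_α(x, y) := υ(α) if x = y, and K⃛_α(x, y) := υ(α) − 2^{−α(β(x ⊕ y) − 1)} (υ(α) + 1) if x ≠ y. Then for every dyadic rational x ∈ [0,1): (i) if 0 < α < 2, then (K⃛_α(x, x) − K⃛_α(x + h, x))/h² → +∞ as h → 0⁺; (ii) if α > 2, then (K⃛_α(x, x) − K⃛_α(x + h, x))/h² → 0 as h → 0⁺; (iii) if α = 2, the limit of (K⃛_α(x, x) − K⃛_α(x + h, x))/h² as h → 0⁺ does not exist—along the sequence h_p = 2^{−p} the quotient converges to a limit different from its limit along the sequence h_p = 3 · 2^{−p−1}. -/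

import Mathlib

noncomputable def binDigit (ℓ : ℕ) (x : ℝ) : ℕ := (⌊(2 : ℝ) ^ ℓ * x⌋).toNat % 2

noncomputable def xorBin (x y : ℝ) : ℝ :=
  ∑' ℓ : ℕ,
    (((binDigit (ℓ + 1) x + binDigit (ℓ + 1) y) % 2 : ℕ) : ℝ) * (2 : ℝ) ^ (-((ℓ : ℤ) + 1))

noncomputable def betaFn (x : ℝ) : ℤ := if x = 0 then 0 else -⌊Real.logb 2 x⌋

noncomputable def upsilon (α : ℝ) : ℝ := (2 : ℝ) ^ (α + 1) / ((2 : ℝ) ^ (α + 1) - 2)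

noncomputable def Kthree (α : ℝ) (x y : ℝ) : ℝ :=
  if x = y then upsilon α
  else upsilon α - (2 : ℝ) ^ (-α * ((betaFn (xorBin x y) : ℝ) - 1)) * (upsilon α + 1)


open Filter Set Real

lemma binDigit_cast (n : ℕ) {h : ℝ} (hh : 0 ≤ h) :
    ((binDigit n h : ℕ) : ℤ) = ⌊(2:ℝ)^n * h⌋ % 2 := by
  have h0 : (0:ℤ) ≤ ⌊(2:ℝ)^n * h⌋ := Int.floor_nonneg.2 (by positivity)
  unfold binDigit
  push_cast
  rw [Int.toNat_of_nonneg h0]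

lemma binDigit_le_one (n : ℕ) (h : ℝ) : binDigit n h ≤ 1 := by
  unfold binDigit; omega

lemma partial_sum_eq {h : ℝ} (hh0 : 0 ≤ h) (hh1 : h < 1) (n : ℕ) :
    ∑ ℓ ∈ Finset.range n, ((binDigit (ℓ+1) h : ℕ) : ℝ) * (2:ℝ)^(-((ℓ:ℤ)+1))
      = (⌊(2:ℝ)^n * h⌋ : ℝ) / 2^n := by
  induction n with
  | zero =>
    have h0 : ⌊h⌋ = 0 := Int.floor_eq_zero_iff.2 ⟨hh0, hh1⟩
    simp [h0]
  | succ n ih =>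
    rw [Finset.sum_range_succ, ih]
    set k := ⌊(2:ℝ)^n * h⌋ with hk
    set K := ⌊(2:ℝ)^(n+1) * h⌋ with hK
    have h2 : (2:ℝ)^(n+1) * h = 2 * ((2:ℝ)^n * h) := by ring
    have hb1 : 2*k ≤ K := by
      rw [hK, Int.le_floor, h2]
      push_cast
      have := Int.floor_le ((2:ℝ)^n * h)
      linarith
    have hb2 : K < 2*k + 2 := by
      rw [hK, Int.floor_lt, h2]
      push_cast
      have := Int.lt_floor_add_one ((2:ℝ)^n * h)
      linarith
    have hKmod : K = 2*k + K % 2 := by omega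
    have hd : ((binDigit (n+1) h : ℕ) : ℝ) = ((K % 2 : ℤ) : ℝ) := by
      rw [hK]
      exact_mod_cast binDigit_cast (n+1) hh0
    rw [hd]
    have hKr : ((K : ℤ) : ℝ) = 2*(k:ℝ) + ((K % 2 : ℤ) : ℝ) := by exact_mod_cast congrArg (fun z : ℤ => (z:ℝ)) hKmod
    have hpow : (2:ℝ)^(-((n:ℤ)+1)) = ((2:ℝ)^(n+1))⁻¹ := by
      rw [show -((n:ℤ)+1) = -((n+1 : ℕ) : ℤ) by push_cast; ring, zpow_neg, zpow_natCast]
    rw [hpow, hKr]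
    field_simp
    ring

lemma tsum_digits {h : ℝ} (hh0 : 0 ≤ h) (hh1 : h < 1) :
    ∑' ℓ : ℕ, ((binDigit (ℓ+1) h : ℕ) : ℝ) * (2:ℝ)^(-((ℓ:ℤ)+1)) = h := by
  have hsummable : Summable (fun ℓ : ℕ => ((binDigit (ℓ+1) h : ℕ) : ℝ) * (2:ℝ)^(-((ℓ:ℤ)+1))) := by
    refine Summable.of_nonneg_of_le (f := fun ℓ : ℕ => (1/2:ℝ)^ℓ) (fun ℓ => by positivity)
      (fun ℓ => ?_) (summable_geometric_of_lt_one (r := (1/2:ℝ)) (by norm_num) (by norm_num))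
    have h1 : ((binDigit (ℓ+1) h : ℕ) : ℝ) ≤ 1 := by exact_mod_cast binDigit_le_one (ℓ+1) h
    have h2 : (2:ℝ)^(-((ℓ:ℤ)+1)) ≤ (1/2:ℝ)^ℓ := by
      rw [zpow_neg, show ((ℓ:ℤ)+1) = ((ℓ+1 : ℕ) : ℤ) by push_cast; ring, zpow_natCast,
        div_pow, one_pow, one_div]
      apply inv_anti₀ (by positivity)
      apply pow_le_pow_right₀ (by norm_num)
      omega
    calc ((binDigit (ℓ+1) h : ℕ) : ℝ) * (2:ℝ)^(-((ℓ:ℤ)+1))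
        ≤ 1 * (1/2:ℝ)^ℓ := mul_le_mul h1 h2 (by positivity) (by norm_num)
      _ = (1/2:ℝ)^ℓ := one_mul _
  have hps := hsummable.hasSum.tendsto_sum_nat
  have hlim : Tendsto (fun n : ℕ => ∑ ℓ ∈ Finset.range n,
      ((binDigit (ℓ+1) h : ℕ) : ℝ) * (2:ℝ)^(-((ℓ:ℤ)+1))) atTop (nhds h) := by
    have heq : ∀ n : ℕ, ∑ ℓ ∈ Finset.range n,
        ((binDigit (ℓ+1) h : ℕ) : ℝ) * (2:ℝ)^(-((ℓ:ℤ)+1)) = (⌊(2:ℝ)^n * h⌋ : ℝ) / 2^n :=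
      partial_sum_eq hh0 hh1
    rw [show nhds h = nhds (h - 0) by norm_num]
    have : Tendsto (fun n : ℕ => h - ((2:ℝ)^n * h - (⌊(2:ℝ)^n * h⌋ : ℝ)) / 2^n) atTop (nhds (h - 0)) := by
      apply Tendsto.sub tendsto_const_nhds
      apply squeeze_zero (g := fun n : ℕ => (1/2:ℝ)^n)
        (fun n => div_nonneg (by linarith [Int.floor_le ((2:ℝ)^n * h)]) (by positivity))
      · intro n
        have h1 : (2:ℝ)^n * h - (⌊(2:ℝ)^n * h⌋ : ℝ) < 1 := by
          have := Int.lt_floor_add_one ((2:ℝ)^n * h); linarith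
        rw [div_le_iff₀ (by positivity), div_pow, one_pow, one_div, inv_mul_cancel₀ (by positivity)]
        linarith
      · exact tendsto_pow_atTop_nhds_zero_of_lt_one (by norm_num) (by norm_num)
    refine this.congr (fun n => ?_)
    rw [heq n, sub_div, mul_div_cancel_left₀ _ (show ((2:ℝ)^n) ≠ 0 by positivity)]
    ring
  exact tendsto_nhds_unique hps hlim


lemma digit_add (j m : ℕ) (hj : j < 2^m) {h : ℝ} (h0 : 0 < h) (hm : h < ((2:ℝ)^m)⁻¹)
    (n : ℕ) (hn : 1 ≤ n) :
    ((binDigit n ((j:ℝ)/2^m + h) + binDigit n ((j:ℝ)/2^m)) % 2 : ℕ) = binDigit n h := by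
  set x : ℝ := (j:ℝ)/2^m with hxdef
  have hx0 : 0 ≤ x := by positivity
  have hh0 : 0 ≤ h := h0.le
  have hxh0 : 0 ≤ x + h := by positivity
  have key : (⌊(2:ℝ)^n * (x+h)⌋ + ⌊(2:ℝ)^n * x⌋) % 2 = ⌊(2:ℝ)^n * h⌋ % 2 := by
    rcases le_or_gt n m with hnm | hnm
    · have hfh : ⌊(2:ℝ)^n * h⌋ = 0 := by
        apply Int.floor_eq_zero_iff.2
        constructor
        · positivity
        · have h1 : (2:ℝ)^n * h < 2^n * (2^m)⁻¹ :=
            mul_lt_mul_of_pos_left hm (by positivity)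
          have h2 : (2:ℝ)^n * (2^m)⁻¹ ≤ 1 := by
            rw [mul_inv_le_iff₀ (by positivity), one_mul]
            exact pow_le_pow_right₀ (by norm_num) hnm
          linarith
      have hpos : (0:ℝ) < 2^(m-n) := by positivity
      have hje : (2:ℝ)^(m-n) * (2^n * x) = j := by
        rw [hxdef]; field_simp
        have hpw : (2:ℝ)^m = 2^(m-n) * 2^n := by rw [← pow_add]; congr 1; omega
        rw [hpw]; ring
      have hfeq : ⌊(2:ℝ)^n * (x+h)⌋ = ⌊(2:ℝ)^n * x⌋ := by
        set k := ⌊(2:ℝ)^n * x⌋ with hk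
        have hk0 : (k:ℝ) ≤ 2^n * x := Int.floor_le _
        have hlt : (j:ℤ) < 2^(m-n) * (k+1) := by
          have : (j:ℝ) < 2^(m-n) * ((k:ℝ)+1) := by
            rw [← hje]
            exact mul_lt_mul_of_pos_left (Int.lt_floor_add_one _) hpos
          exact_mod_cast this
        have hle : ((j:ℝ)+1) ≤ 2^(m-n) * ((k:ℝ)+1) := by exact_mod_cast hlt
        have h2m : (2:ℝ)^(m-n) * (2^n * h) = 2^m * h := by
          rw [← mul_assoc, ← pow_add]; congr 2; omega
        have hm1 : (2:ℝ)^m * h < 1 := by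
          have := mul_lt_mul_of_pos_left hm (show (0:ℝ) < 2^m by positivity)
          rwa [mul_inv_cancel₀ (by positivity)] at this
        have hmul : (2:ℝ)^(m-n) * (2^n * (x+h)) < 2^(m-n) * ((k:ℝ)+1) := by
          have : (2:ℝ)^(m-n) * (2^n * (x+h)) = 2^(m-n) * (2^n*x) + 2^(m-n) * (2^n*h) := by
            ring
          rw [this, hje, h2m]
          linarith
        have hup : (2:ℝ)^n * (x+h) < (k:ℝ)+1 := lt_of_mul_lt_mul_left hmul hpos.le
        have hdown : (k:ℝ) ≤ 2^n * (x+h) := by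
          have : (2:ℝ)^n * x ≤ 2^n * (x+h) := by nlinarith [pow_pos (show (0:ℝ)<2 by norm_num) n]
          linarith
        exact Int.floor_eq_iff.2 ⟨hdown, hup⟩
      rw [hfeq, hfh]; omega
    · have hxint : (2:ℝ)^n * x = ((2^(n-m) * j : ℕ) : ℝ) := by
        rw [hxdef]; push_cast; field_simp
        have hpw : (2:ℝ)^n = 2^(n-m) * 2^m := by rw [← pow_add]; congr 1; omega
        rw [hpw]; ring
      have hfx : ⌊(2:ℝ)^n * x⌋ = ((2^(n-m) * j : ℕ) : ℤ) := by
        rw [hxint, Int.floor_natCast]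
      have hfxh : ⌊(2:ℝ)^n * (x+h)⌋ = ⌊(2:ℝ)^n * h⌋ + ((2^(n-m) * j : ℕ) : ℤ) := by
        rw [mul_add, hxint, add_comm ((2^(n-m)*j:ℕ):ℝ) _, Int.floor_add_natCast]
      have heven : ((2^(n-m) * j : ℕ) : ℤ) = 2 * ((2^(n-m-1) * j : ℕ) : ℤ) := by
        obtain ⟨s, hs⟩ : ∃ s, n - m = s + 1 := ⟨n-m-1, by omega⟩
        have hs2 : n - m - 1 = s := by omega
        push_cast [hs, hs2, pow_succ]
        ring
      rw [hfx, hfxh]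
      omega
  have c1 := binDigit_cast n hxh0
  have c2 := binDigit_cast n hx0
  have c3 := binDigit_cast n hh0
  zify
  omega

lemma xorBin_eq (j m : ℕ) (hj : j < 2^m) {h : ℝ} (h0 : 0 < h) (hm : h < ((2:ℝ)^m)⁻¹) :
    xorBin ((j:ℝ)/2^m + h) ((j:ℝ)/2^m) = h := by
  have h1 : h < 1 := by
    have : ((2:ℝ)^m)⁻¹ ≤ 1 := by
      rw [inv_le_one₀ (by positivity)]
      exact one_le_pow₀ (by norm_num)
    linarith
  unfold xorBin
  rw [tsum_congr (fun ℓ : ℕ => by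
    rw [digit_add j m hj h0 hm (ℓ+1) (by omega)] :
    ∀ ℓ : ℕ, (((binDigit (ℓ+1) ((j:ℝ)/2^m + h) + binDigit (ℓ+1) ((j:ℝ)/2^m)) % 2 : ℕ) : ℝ)
        * (2:ℝ)^(-((ℓ:ℤ)+1)) = ((binDigit (ℓ+1) h : ℕ) : ℝ) * (2:ℝ)^(-((ℓ:ℤ)+1)))]
  exact tsum_digits h0.le h1


lemma betaFn_bounds {h : ℝ} (h0 : 0 < h) :
    (2:ℝ) ^ (((-betaFn h : ℤ)):ℝ) ≤ h ∧ h < (2:ℝ) ^ (((1 - betaFn h : ℤ)):ℝ) := by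
  have hne : h ≠ 0 := h0.ne'
  unfold betaFn
  rw [if_neg hne]
  constructor
  · have hle : (2:ℝ)^((⌊Real.logb 2 h⌋ : ℝ)) ≤ (2:ℝ)^(Real.logb 2 h) :=
      Real.rpow_le_rpow_of_exponent_le (by norm_num) (Int.floor_le _)
    rw [Real.rpow_logb (by norm_num) (by norm_num) h0] at hle
    convert hle using 2
    push_cast
    ring
  · have hlt : (2:ℝ)^(Real.logb 2 h) < (2:ℝ)^((⌊Real.logb 2 h⌋ : ℝ) + 1) :=
      Real.rpow_lt_rpow_of_exponent_lt (by norm_num) (Int.lt_floor_add_one _)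
    rw [Real.rpow_logb (by norm_num) (by norm_num) h0] at hlt
    convert hlt using 2
    push_cast
    ring

lemma rpow_beta_ge {α : ℝ} (hα : 0 < α) {h : ℝ} (h0 : 0 < h) :
    h ^ α ≤ (2:ℝ) ^ (-α * ((betaFn h : ℝ) - 1)) := by
  obtain ⟨hl, hu⟩ := betaFn_bounds h0
  calc h^α ≤ ((2:ℝ)^(((1 - betaFn h : ℤ)):ℝ))^α := Real.rpow_le_rpow h0.le hu.le hα.le
    _ = (2:ℝ)^(-α * ((betaFn h : ℝ) - 1)) := by
      rw [← Real.rpow_mul (by norm_num)]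
      congr 1
      push_cast
      ring

lemma rpow_beta_le {α : ℝ} (hα : 0 < α) {h : ℝ} (h0 : 0 < h) :
    (2:ℝ) ^ (-α * ((betaFn h : ℝ) - 1)) ≤ (2:ℝ)^α * h ^ α := by
  obtain ⟨hl, hu⟩ := betaFn_bounds h0
  have h2 : ((2:ℝ)^(((-betaFn h : ℤ)):ℝ))^α ≤ h^α :=
    Real.rpow_le_rpow (by positivity) hl hα.le
  calc (2:ℝ)^(-α*((betaFn h:ℝ)-1))
      = (2:ℝ)^α * ((2:ℝ)^(((-betaFn h : ℤ)):ℝ))^α := by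
        rw [← Real.rpow_mul (by norm_num), ← Real.rpow_add (by norm_num)]
        congr 1
        push_cast
        ring
    _ ≤ (2:ℝ)^α * h^α := by
        apply mul_le_mul_of_nonneg_left h2 (by positivity)

lemma upsilon_add_one_pos {α : ℝ} (hα : 0 < α) : 0 < upsilon α + 1 := by
  have h2 : (2:ℝ)^(1:ℝ) < (2:ℝ)^(α+1) :=
    Real.rpow_lt_rpow_of_exponent_lt (by norm_num) (by linarith)
  rw [Real.rpow_one] at h2
  have hnum : (0:ℝ) < (2:ℝ)^(α+1) := by positivity
  have : 0 < upsilon α := div_pos hnum (by linarith)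
  linarith

lemma quot_eq (α : ℝ) (j m : ℕ) {h : ℝ} (hj : j < 2^m) (h0 : 0 < h) (hm : h < ((2:ℝ)^m)⁻¹) :
    (Kthree α ((j:ℝ)/2^m) ((j:ℝ)/2^m) - Kthree α ((j:ℝ)/2^m + h) ((j:ℝ)/2^m)) / h^2
      = (2:ℝ)^(-α * ((betaFn h : ℝ) - 1)) * (upsilon α + 1) / h^2 := by
  unfold Kthree
  rw [if_pos rfl, if_neg (by
    intro hc
    have : h = 0 := by linarith [congrArg id hc]
    exact h0.ne' this), xorBin_eq j m hj h0 hm]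
  ring

lemma betaFn_two_zpow (p : ℕ) : betaFn ((2:ℝ)^(-(p:ℤ))) = p := by
  have hne : ((2:ℝ)^(-(p:ℤ))) ≠ 0 := by positivity
  unfold betaFn
  rw [if_neg hne, ← Real.rpow_intCast 2 (-(p:ℤ)),
    Real.logb_rpow (by norm_num) (by norm_num), Int.floor_intCast]
  ring

lemma floor_logb3 : ⌊Real.logb 2 3⌋ = 1 := by
  have h1 : (1:ℝ) ≤ Real.logb 2 3 := by
    rw [show (1:ℝ) = Real.logb 2 2 from (Real.logb_self_eq_one (by norm_num)).symm]
    exact Real.logb_le_logb_of_le (by norm_num) (by norm_num) (by norm_num)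
  have h2 : Real.logb 2 3 < 2 := by
    have h3 : Real.logb 2 3 < Real.logb 2 4 :=
      Real.logb_lt_logb (by norm_num) (by norm_num) (by norm_num)
    have h4 : Real.logb 2 4 = 2 := by
      rw [show (4:ℝ) = 2^(2:ℕ) by norm_num, Real.logb_pow,
        Real.logb_self_eq_one (by norm_num)]
      norm_num
    linarith
  rw [Int.floor_eq_iff]
  constructor
  · exact_mod_cast h1
  · push_cast; linarith

lemma betaFn_three (p : ℕ) : betaFn (3 * (2:ℝ)^(-(p:ℤ)-1)) = p := by
  have hne : (3 * (2:ℝ)^(-(p:ℤ)-1)) ≠ 0 := by positivity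
  unfold betaFn
  rw [if_neg hne, Real.logb_mul (by norm_num) (by positivity),
    ← Real.rpow_intCast 2 (-(p:ℤ)-1), Real.logb_rpow (by norm_num) (by norm_num),
    Int.floor_add_intCast, floor_logb3]
  ring


theorem stmt_15 (α : ℝ) (hα : 0 < α) (x : ℝ) (hx : x ∈ Set.Ico (0 : ℝ) 1)
    (hdy : ∃ j mm : ℕ, x = (j : ℝ) / 2 ^ mm) :
    (α < 2 →
      Filter.Tendsto (fun h : ℝ => (Kthree α x x - Kthree α (x + h) x) / h ^ 2)
        (nhdsWithin 0 (Set.Ioi 0)) Filter.atTop) ∧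
    (2 < α →
      Filter.Tendsto (fun h : ℝ => (Kthree α x x - Kthree α (x + h) x) / h ^ 2)
        (nhdsWithin 0 (Set.Ioi 0)) (nhds 0)) ∧
    (α = 2 →
      ∃ L₁ L₂ : ℝ, L₁ ≠ L₂ ∧
        Filter.Tendsto
          (fun p : ℕ =>
            (Kthree α x x - Kthree α (x + (2 : ℝ) ^ (-(p : ℤ))) x) /
              ((2 : ℝ) ^ (-(p : ℤ))) ^ 2)
          Filter.atTop (nhds L₁) ∧
        Filter.Tendsto
          (fun p : ℕ =>
            (Kthree α x x - Kthree α (x + 3 * (2 : ℝ) ^ (-(p : ℤ) - 1)) x) /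
              (3 * (2 : ℝ) ^ (-(p : ℤ) - 1)) ^ 2)
          Filter.atTop (nhds L₂)) := by
  obtain ⟨j, m, rfl⟩ := hdy
  have hj : j < 2^m := by
    have := hx.2
    rw [div_lt_one (by positivity)] at this
    exact_mod_cast this
  have hEv : ∀ᶠ h : ℝ in nhdsWithin 0 (Set.Ioi 0), h ∈ Set.Ioo 0 (((2:ℝ)^m)⁻¹) :=
    Ioo_mem_nhdsGT_of_mem ⟨le_refl 0, by positivity⟩
  refine ⟨fun hα2 => ?_, fun hα2 => ?_, fun hα2 => ?_⟩
  · -- α < 2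
    have hC := upsilon_add_one_pos hα
    refine Filter.tendsto_atTop_mono'
      (nhdsWithin 0 (Set.Ioi 0)) (f₁ := fun h : ℝ => (upsilon α + 1) * h^(α-2)) ?_ ?_
    · filter_upwards [hEv] with h hh
      obtain ⟨h0, hm'⟩ := hh
      rw [quot_eq α j m hj h0 hm']
      have e1 : h^(α-2) = h^α / h^2 := by
        rw [← Real.rpow_natCast h 2, ← Real.rpow_sub h0]
        norm_num
      calc (upsilon α + 1) * h^(α-2) = h^α * (upsilon α + 1) / h^2 := by rw [e1]; ring
        _ ≤ (2:ℝ)^(-α * ((betaFn h : ℝ) - 1)) * (upsilon α + 1) / h^2 := by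
            gcongr
            exact rpow_beta_ge hα h0
    · have h1 : Filter.Tendsto (fun h:ℝ => h^(α-2)) (nhdsWithin 0 (Set.Ioi 0)) Filter.atTop := by
        have h2 := (tendsto_rpow_atTop (show (0:ℝ) < 2-α by linarith)).comp
          tendsto_inv_nhdsGT_zero
        apply h2.congr'
        filter_upwards [self_mem_nhdsWithin] with h hh
        simp only [Function.comp_apply]
        rw [Real.inv_rpow (le_of_lt hh), ← Real.rpow_neg (le_of_lt hh)]
        norm_num
      exact h1.const_mul_atTop hC
  · -- 2 < α
    have hC := upsilon_add_one_pos hα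
    refine squeeze_zero' ?_ ?_
      (g := fun h : ℝ => ((2:ℝ)^α * (upsilon α + 1)) * h^(α-2)) ?_
    · filter_upwards [hEv] with h hh
      obtain ⟨h0, hm'⟩ := hh
      rw [quot_eq α j m hj h0 hm']
      positivity
    · filter_upwards [hEv] with h hh
      obtain ⟨h0, hm'⟩ := hh
      rw [quot_eq α j m hj h0 hm']
      have e1 : h^(α-2) = h^α / h^2 := by
        rw [← Real.rpow_natCast h 2, ← Real.rpow_sub h0]
        norm_num
      calc (2:ℝ)^(-α * ((betaFn h : ℝ) - 1)) * (upsilon α + 1) / h^2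
          ≤ ((2:ℝ)^α * h^α) * (upsilon α + 1) / h^2 := by
            gcongr
            exact rpow_beta_le hα h0
        _ = ((2:ℝ)^α * (upsilon α + 1)) * h^(α-2) := by rw [e1]; ring
    · have hcont : ContinuousAt (fun x:ℝ => x^(α-2)) 0 :=
        Real.continuousAt_rpow_const 0 (α-2) (Or.inr (by linarith))
      have h1 := hcont.tendsto
      rw [Real.zero_rpow (by intro hc; linarith [hc] : α - 2 ≠ 0)] at h1
      have h2 : Filter.Tendsto (fun h:ℝ => ((2:ℝ)^α * (upsilon α + 1)) * h^(α-2))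
          (nhdsWithin 0 (Set.Ioi 0)) (nhds (((2:ℝ)^α * (upsilon α + 1)) * 0)) :=
        (h1.mono_left (nhdsWithin_le_nhds (s := Set.Ioi 0))).const_mul _
      simpa using h2
  · -- α = 2
    subst hα2
    have h8 : (2:ℝ)^((2:ℝ)+1) = 8 := by
      rw [show (2:ℝ)+1 = ((3:ℕ):ℝ) by norm_num, Real.rpow_natCast]
      norm_num
    have hC2 : upsilon 2 + 1 = 7/3 := by unfold upsilon; rw [h8]; norm_num
    refine ⟨28/3, 112/27, by norm_num, ?_, ?_⟩
    · refine Filter.Tendsto.congr' ?_ tendsto_const_nhds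
      filter_upwards [Filter.eventually_ge_atTop (m+1)] with p hp
      have h0 : (0:ℝ) < (2:ℝ)^(-(p:ℤ)) := by positivity
      have hm' : (2:ℝ)^(-(p:ℤ)) < ((2:ℝ)^m)⁻¹ := by
        rw [← zpow_natCast (2:ℝ) m, ← zpow_neg]
        exact zpow_lt_zpow_right₀ (by norm_num) (by omega)
      rw [quot_eq 2 j m hj h0 hm', betaFn_two_zpow p, hC2]
      have e3 : (2:ℝ)^(-2*((p:ℝ)-1)) = (2:ℝ)^((2 - 2*(p:ℤ))) := by
        rw [← Real.rpow_intCast 2 (2-2*(p:ℤ))]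
        congr 1
        push_cast
        ring
      have e5 : (2:ℝ)^((2:ℤ) - 2*(p:ℤ)) = 4 / ((2:ℝ)^p)^2 := by
        rw [zpow_sub₀ (by norm_num : (2:ℝ) ≠ 0)]
        congr 1
        · norm_num
        · rw [show (2*(p:ℤ)) = (((p*2 : ℕ)):ℤ) by push_cast; ring, zpow_natCast, pow_mul]
      have e4 : (2:ℝ)^(-(p:ℤ)) = ((2:ℝ)^p)⁻¹ := by rw [zpow_neg, zpow_natCast]
      push_cast
      rw [e3, e5, e4]
      have ht : (0:ℝ) < (2:ℝ)^p := by positivity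
      field_simp
      ring
    · refine Filter.Tendsto.congr' ?_ tendsto_const_nhds
      filter_upwards [Filter.eventually_ge_atTop (m+1)] with p hp
      have h0 : (0:ℝ) < 3 * (2:ℝ)^(-(p:ℤ)-1) := by positivity
      have e6 : (2:ℝ)^(-(m:ℤ)-2) = ((2:ℝ)^m)⁻¹ / 4 := by
        rw [zpow_sub₀ (by norm_num : (2:ℝ) ≠ 0), zpow_neg, zpow_natCast]
        norm_num
      have hm' : 3 * (2:ℝ)^(-(p:ℤ)-1) < ((2:ℝ)^m)⁻¹ := by
        have e7 : (2:ℝ)^(-(p:ℤ)-1) ≤ (2:ℝ)^(-(m:ℤ)-2) :=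
          zpow_le_zpow_right₀ (by norm_num) (by omega)
        have hpos : (0:ℝ) < ((2:ℝ)^m)⁻¹ := by positivity
        rw [e6] at e7
        linarith
      rw [quot_eq 2 j m hj h0 hm', betaFn_three p, hC2]
      have e3 : (2:ℝ)^(-2*((p:ℝ)-1)) = (2:ℝ)^((2 - 2*(p:ℤ))) := by
        rw [← Real.rpow_intCast 2 (2-2*(p:ℤ))]
        congr 1
        push_cast
        ring
      have e5 : (2:ℝ)^((2:ℤ) - 2*(p:ℤ)) = 4 / ((2:ℝ)^p)^2 := by
        rw [zpow_sub₀ (by norm_num : (2:ℝ) ≠ 0)]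
        congr 1
        · norm_num
        · rw [show (2*(p:ℤ)) = (((p*2 : ℕ)):ℤ) by push_cast; ring, zpow_natCast, pow_mul]
      have e8 : (2:ℝ)^(-(p:ℤ)-1) = ((2:ℝ)^p * 2)⁻¹ := by
        rw [show -(p:ℤ)-1 = -((p+1:ℕ):ℤ) by push_cast; ring, zpow_neg, zpow_natCast, pow_succ]
      push_cast
      rw [e3, e5, e8]
      have ht : (0:ℝ) < (2:ℝ)^p := by positivity
      field_simp
      ring
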